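/- For every integer r ≥ 2, every maximum matching M of the graph B_{2r,2r−1} saturates all vertices of U; consequently every maximum matching of B_{2r,2r−1} has exactly 2r² − r edges and leaves exactly r vertices of V unsaturated. -/

import Mathlib

/-- A matching `M` of `G` is maximum if no matching of `G` has more edges. -/
def SimpleGraph.IsMaximumMatching {α : Type*} (G : SimpleGraph α) (M : G.Subgraph) : Prop :=
  M.IsMatching ∧ ∀ M' : G.Subgraph, M'.IsMatching → M'.edgeSet.ncard ≤ M.edgeSet.ncard

/-- The bipartite graph `B_{2r,2r-1}`: the left part `U` consists of the vertices
`u_{(i,j)}` for `i < j` (encoded as `Sum.inl ⟨(i, j), hij⟩`), the right part `V` consists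
of the vertices `v_k^{(i)}` (encoded as `Sum.inr (i, k)`), and `u_{(i,j)}` is joined
to `v_k^{(i)}` and `v_k^{(j)}` for all `k`. -/
def BGraph (r : ℕ) :
    SimpleGraph ({p : Fin (2 * r) × Fin (2 * r) // p.1 < p.2} ⊕ Fin (2 * r) × Fin r) where
  Adj a b :=
    match a, b with
    | .inl u, .inr v => v.1 = u.1.1 ∨ v.1 = u.1.2
    | .inr v, .inl u => v.1 = u.1.1 ∨ v.1 = u.1.2
    | _, _ => False
  symm := by constructor; rintro (u | v) (u' | v') h <;> exact h
  loopless := by constructor; rintro (u | v) h <;> exact h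

namespace BProof

abbrev UT (r : ℕ) := {p : Fin (2*r) × Fin (2*r) // p.1 < p.2}
abbrev VT (r : ℕ) := Fin (2*r) × Fin r

def pairEquiv (n : ℕ) : {p : Fin n × Fin n // p.1 < p.2} ≃ Σ j : Fin n, Fin j.val where
  toFun p := ⟨p.1.2, ⟨p.1.1, p.2⟩⟩
  invFun q := ⟨(⟨q.2.1, lt_trans q.2.2 q.1.2⟩, q.1), q.2.2⟩
  left_inv _ := rfl
  right_inv _ := rfl

lemma cardU (r : ℕ) : Fintype.card (UT r) = 2 * r^2 - r := by
  rw [Fintype.card_congr (pairEquiv (2*r)), Fintype.card_sigma]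
  simp only [Fintype.card_fin]
  rw [show (∑ x : Fin (2*r), (x:ℕ)) = ∑ i ∈ Finset.range (2*r), i from
    Fin.sum_univ_eq_sum_range (fun i => i) (2*r)]
  have h := Finset.sum_range_id_mul_two (2*r)
  have : (2*r^2 - r) * 2 = 2*r*(2*r-1) := by
    rcases Nat.eq_zero_or_pos r with h|h
    · subst h; rfl
    · zify [show r ≤ 2*r^2 by nlinarith, show 1 ≤ 2*r by omega]; ring
  omega

def fmap (r : ℕ) (p : UT r) : VT r :=
  if h : (p.1.2 : ℕ) - p.1.1 ≤ r then
    (p.1.1, ⟨(p.1.2 : ℕ) - p.1.1 - 1, by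
      have h1 : (p.1.1 : ℕ) < p.1.2 := p.2
      have h2 : (p.1.2 : ℕ) < 2*r := p.1.2.isLt
      omega⟩)
  else
    (p.1.2, ⟨2*r - 1 - ((p.1.2 : ℕ) - p.1.1), by
      have h1 : (p.1.1 : ℕ) < p.1.2 := p.2
      have h2 : (p.1.2 : ℕ) < 2*r := p.1.2.isLt
      omega⟩)

lemma fmap_inj (r : ℕ) : Function.Injective (fmap r) := by
  rintro ⟨⟨⟨i,hi⟩,⟨j,hj⟩⟩,hij⟩ ⟨⟨⟨i',hi'⟩,⟨j',hj'⟩⟩,hij'⟩ h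
  simp only [fmap] at h
  simp only [Fin.lt_def] at hij hij'
  split_ifs at h with h1 h2 h2 <;>
    simp only [Prod.mk.injEq, Fin.mk.injEq] at h <;>
    · ext <;> simp <;> omega

lemma fmap_adj (r : ℕ) (u : UT r) :
    (BGraph r).Adj (Sum.inl u) (Sum.inr (fmap r u)) := by
  show (fmap r u).1 = u.1.1 ∨ (fmap r u).1 = u.1.2
  unfold fmap; split_ifs <;> simp

def M0 (r : ℕ) : (BGraph r).Subgraph where
  verts := Set.range Sum.inl ∪ Set.range (fun u : UT r => Sum.inr (fmap r u))
  Adj a b := (∃ u, a = Sum.inl u ∧ b = Sum.inr (fmap r u)) ∨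
             (∃ u, b = Sum.inl u ∧ a = Sum.inr (fmap r u))
  adj_sub := by
    rintro a b (⟨u, rfl, rfl⟩ | ⟨u, rfl, rfl⟩)
    · exact fmap_adj r u
    · exact (fmap_adj r u).symm
  edge_vert := by
    rintro a b (⟨u, rfl, rfl⟩ | ⟨u, rfl, rfl⟩)
    · exact Or.inl ⟨u, rfl⟩
    · exact Or.inr ⟨u, rfl⟩
  symm := by
    constructor
    rintro a b (h | h)
    · exact Or.inr h
    · exact Or.inl h

lemma M0_isMatching (r : ℕ) : (M0 r).IsMatching := by
  rintro a (⟨u, rfl⟩ | ⟨u, rfl⟩)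
  · refine ⟨Sum.inr (fmap r u), Or.inl ⟨u, rfl, rfl⟩, ?_⟩
    rintro w (⟨u', hu, rfl⟩ | ⟨u', rfl, hu⟩)
    · obtain rfl : u = u' := Sum.inl.inj hu
      rfl
    · exact absurd hu (by simp)
  · refine ⟨Sum.inl u, Or.inr ⟨u, rfl, rfl⟩, ?_⟩
    rintro w (⟨u', hu, rfl⟩ | ⟨u', rfl, hu⟩)
    · exact absurd hu (by simp)
    · obtain rfl : u = u' := fmap_inj r (Sum.inr.inj hu)
      rfl

lemma M0_edgeSet (r : ℕ) :
    (M0 r).edgeSet = Set.range (fun u : UT r => s(Sum.inl u, Sum.inr (fmap r u))) := by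
  ext e
  induction e using Sym2.ind with
  | _ a b =>
    simp only [SimpleGraph.Subgraph.mem_edgeSet, Set.mem_range]
    constructor
    · rintro (⟨u, rfl, rfl⟩ | ⟨u, rfl, rfl⟩)
      · exact ⟨u, rfl⟩
      · exact ⟨u, Sym2.eq_swap⟩
    · rintro ⟨u, hu⟩
      rw [Sym2.eq_iff] at hu
      rcases hu with ⟨rfl, rfl⟩ | ⟨rfl, rfl⟩
      · exact Or.inl ⟨u, rfl, rfl⟩
      · exact Or.inr ⟨u, rfl, rfl⟩

lemma M0_ncard (r : ℕ) : (M0 r).edgeSet.ncard = 2 * r^2 - r := by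
  rw [M0_edgeSet, ← Set.image_univ, Set.ncard_image_of_injective _ (by
    intro u u' h
    simp only [Sym2.eq_iff, Prod.mk.injEq] at h
    rcases h with ⟨h1, _⟩ | ⟨h1, _⟩ <;> simp_all),
    Set.ncard_univ, Nat.card_eq_fintype_card, cardU]

lemma edge_form {r : ℕ} {M' : (BGraph r).Subgraph} {e : Sym2 (UT r ⊕ VT r)}
    (he : e ∈ M'.edgeSet) :
    ∃ u v, e = s(Sum.inl u, Sum.inr v) ∧ M'.Adj (Sum.inl u) (Sum.inr v) := by
  induction e using Sym2.ind with
  | _ a b =>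
    rw [SimpleGraph.Subgraph.mem_edgeSet] at he
    rcases a with u | v <;> rcases b with u' | v'
    · exact absurd (M'.adj_sub he) (by simp [BGraph])
    · exact ⟨u, v', rfl, he⟩
    · exact ⟨u', v, Sym2.eq_swap, he.symm⟩
    · exact absurd (M'.adj_sub he) (by simp [BGraph])

variable {r : ℕ}

noncomputable def uOf [Nonempty (UT r)] (e : Sym2 (UT r ⊕ VT r)) : UT r :=
  if h : ∃ u v, e = s(Sum.inl u, Sum.inr v) then h.choose else Classical.arbitrary _

noncomputable def vOf [Nonempty (VT r)] (e : Sym2 (UT r ⊕ VT r)) : VT r :=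
  if h : ∃ u v, e = s(Sum.inl u, Sum.inr v) then h.choose_spec.choose else Classical.arbitrary _

lemma uOf_eq [Nonempty (UT r)] (u : UT r) (v : VT r) :
    uOf (s(Sum.inl u, Sum.inr v)) = u := by
  have h : ∃ u' v', s(Sum.inl u, Sum.inr v) = s(Sum.inl u', Sum.inr v') := ⟨u, v, rfl⟩
  rw [uOf, dif_pos h]
  have := h.choose_spec.choose_spec
  rw [Sym2.eq_iff] at this
  rcases this with ⟨h1, _⟩ | ⟨h1, _⟩
  · exact (Sum.inl.inj h1).symm
  · exact (Sum.inl_ne_inr h1).elim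

lemma vOf_eq [Nonempty (VT r)] (u : UT r) (v : VT r) :
    vOf (s(Sum.inl u, Sum.inr v)) = v := by
  have h : ∃ u' v', s(Sum.inl u, Sum.inr v) = s(Sum.inl u', Sum.inr v') := ⟨u, v, rfl⟩
  rw [vOf, dif_pos h]
  have := h.choose_spec.choose_spec
  rw [Sym2.eq_iff] at this
  rcases this with ⟨_, h2⟩ | ⟨h2, _⟩
  · exact (Sum.inr.inj h2).symm
  · exact (Sum.inl_ne_inr h2).elim

lemma uOf_injOn [Nonempty (UT r)] {M' : (BGraph r).Subgraph} (hM' : M'.IsMatching) :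
    Set.InjOn uOf M'.edgeSet := by
  intro e1 he1 e2 he2 h
  obtain ⟨u1, v1, rfl, h1⟩ := edge_form he1
  obtain ⟨u2, v2, rfl, h2⟩ := edge_form he2
  rw [uOf_eq, uOf_eq] at h
  subst h
  obtain ⟨w, _, hw⟩ := hM' (M'.edge_vert h1)
  have := (hw _ h1).trans (hw _ h2).symm
  simp_all

lemma vOf_injOn [Nonempty (VT r)] {M' : (BGraph r).Subgraph} (hM' : M'.IsMatching) :
    Set.InjOn vOf M'.edgeSet := by
  intro e1 he1 e2 he2 h
  obtain ⟨u1, v1, rfl, h1⟩ := edge_form he1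
  obtain ⟨u2, v2, rfl, h2⟩ := edge_form he2
  rw [vOf_eq, vOf_eq] at h
  subst h
  obtain ⟨w, _, hw⟩ := hM' (M'.edge_vert h1.symm)
  have := (hw _ h1.symm).trans (hw _ h2.symm).symm
  simp_all

lemma matching_le [Nonempty (UT r)] {M' : (BGraph r).Subgraph} (hM' : M'.IsMatching) :
    M'.edgeSet.ncard ≤ 2 * r^2 - r := by
  have h := Set.ncard_le_ncard_of_injOn uOf (fun e _ => Set.mem_univ (uOf e))
    (uOf_injOn hM') (Set.finite_univ)
  rwa [Set.ncard_univ, Nat.card_eq_fintype_card, cardU] at h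

end BProof

open BProof


/-- Every maximum matching of `B_{2r,2r-1}` saturates all vertices of `U`, has exactly
`2r² - r` edges, and leaves exactly `r` vertices of `V` unsaturated. -/
theorem stmt_4 (r : ℕ) (hr : 2 ≤ r) (M : (BGraph r).Subgraph)
    (hM : (BGraph r).IsMaximumMatching M) :
    (∀ u : {p : Fin (2 * r) × Fin (2 * r) // p.1 < p.2}, ∃ b, M.Adj (Sum.inl u) b) ∧
    M.edgeSet.ncard = 2 * r ^ 2 - r ∧
    {v : Fin (2 * r) × Fin r | ∀ b, ¬ M.Adj (Sum.inr v) b}.ncard = r := by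
  have hr0 : 0 < r := by omega
  haveI : Nonempty (UT r) :=
    ⟨⟨(⟨0, by omega⟩, ⟨1, by omega⟩), by simp [Fin.lt_def]⟩⟩
  haveI : Nonempty (VT r) := ⟨(⟨0, by omega⟩, ⟨0, hr0⟩)⟩
  obtain ⟨hMm, hmax⟩ := hM
  -- the number of edges
  have hcard : M.edgeSet.ncard = 2 * r^2 - r :=
    le_antisymm (matching_le hMm) ((M0_ncard r) ▸ hmax (M0 r) (M0_isMatching r))
  -- saturation of U
  have hUsat : ∀ u : UT r, ∃ b, M.Adj (Sum.inl u) b := by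
    have hsub : uOf '' M.edgeSet ⊆ Set.univ := Set.subset_univ _
    have himg : uOf '' M.edgeSet = Set.univ := by
      apply Set.eq_of_subset_of_ncard_le hsub _ Set.finite_univ
      rw [Set.ncard_image_of_injOn (uOf_injOn hMm), hcard,
        Set.ncard_univ, Nat.card_eq_fintype_card, cardU]
    intro u
    have : u ∈ uOf '' M.edgeSet := himg ▸ Set.mem_univ u
    obtain ⟨e, he, hue⟩ := this
    obtain ⟨u', v, rfl, hadj⟩ := edge_form he
    rw [uOf_eq] at hue
    subst hue
    exact ⟨Sum.inr v, hadj⟩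
  refine ⟨hUsat, hcard, ?_⟩
  -- unsaturated vertices of V
  have hT : vOf '' M.edgeSet = {v : VT r | ∃ b, M.Adj (Sum.inr v) b} := by
    ext v
    constructor
    · rintro ⟨e, he, rfl⟩
      obtain ⟨u, v', rfl, hadj⟩ := edge_form he
      rw [vOf_eq]
      exact ⟨Sum.inl u, hadj.symm⟩
    · rintro ⟨b, hb⟩
      rcases b with u | v'
      · refine ⟨s(Sum.inl u, Sum.inr v), ?_, vOf_eq u v⟩
        rw [SimpleGraph.Subgraph.mem_edgeSet]
        exact hb.symm
      · exact absurd (M.adj_sub hb) (by simp [BGraph])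
  have hTcard : {v : VT r | ∃ b, M.Adj (Sum.inr v) b}.ncard = 2 * r^2 - r := by
    rw [← hT, Set.ncard_image_of_injOn (vOf_injOn hMm), hcard]
  have hcompl : {v : Fin (2 * r) × Fin r | ∀ b, ¬ M.Adj (Sum.inr v) b} =
      {v : VT r | ∃ b, M.Adj (Sum.inr v) b}ᶜ := by
    ext v; simp
  rw [hcompl]
  have hadd := Set.ncard_add_ncard_compl {v : VT r | ∃ b, M.Adj (Sum.inr v) b}
  rw [hTcard, Nat.card_eq_fintype_card] at hadd
  have hV : Fintype.card (VT r) = 2 * r^2 := by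
    rw [Fintype.card_prod, Fintype.card_fin, Fintype.card_fin]; ring
  rw [hV] at hadd
  have hge : r ≤ 2 * r^2 := by nlinarith
  omega
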